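/- arXiv:2501.11275 — 2 statements merged into one kernel-verified Lean document; each statement's English description precedes it below -/
import Mathlib

section
/- For every l ∈ ℕ₊^d, every i ∈ 𝓘_l, the associated degree vector α with α_j = min(m, l_j+1), and every 1 ≤ p ≤ ∞, the tensor-product basis function satisfies ‖φ^{α}_{l,i}‖_{L_p([0,1]^d)} ≤ 1.117^d · 2^{d/p} · 2^{−|l|_1/p} (with the convention 1/p = 0 when p = ∞). -/
noncomputable section

open Finset MeasureTheory Real
open scoped ENNReal

/-- The ReLU function. -/
def relu (t : ℝ) : ℝ := max t 0

/-- Mesh size `h_l = 2^{-l}`. -/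
def hstep (l : ℕ) : ℝ := (2 : ℝ) ^ (-(l : ℤ))

/-- Grid point `x_{l,i} = i·2^{-l}`. -/
def xg (l i : ℕ) : ℝ := (i : ℝ) * hstep l

/-- For `1 ≤ l' < l` and odd `i`, the level-`l'` hierarchical ancestor of `x_{l,i}`:
the unique odd `i'` with `|x_{l,i} - x_{l',i'}| < 2^{-l'}`. -/
def ancAt (l i l' : ℕ) : ℝ :=
  (if (i / 2 ^ (l - l')) % 2 = 1 then ((i / 2 ^ (l - l') : ℕ) : ℝ)
   else ((i / 2 ^ (l - l') : ℕ) : ℝ) + 1) * hstep l'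

/-- The ancestors of `x_{l,i}` in order of decreasing level:
levels `l-1, l-2, …, 1`, followed by the level-`0` ancestors `0` and `1`. -/
def ancList (l i : ℕ) : List ℝ :=
  ((List.range (l - 1)).map fun t => ancAt l i (l - 1 - t)) ++ [0, 1]

open Classical in
/-- The ancestors of `x_{l,i}`, in order of decreasing level, that differ from `x_{l,i} ± h_l`. -/
def ancList' (l i : ℕ) : List ℝ :=
  (ancList l i).filter fun a => decide (a ≠ xg l i + hstep l ∧ a ≠ xg l i - hstep l)

/-- The interpolation nodes `x_{l,i,k}`: `x_{l,i,1} = x_{l,i}+h_l`, `x_{l,i,2} = x_{l,i}-h_l`,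
and for `k ≥ 3`, `x_{l,i,k}` is the `(k-2)`-th ancestor of `x_{l,i}`, in order of decreasing
level, differing from `x_{l,i} ± h_l`. -/
def node (l i k : ℕ) : ℝ :=
  if k = 1 then xg l i + hstep l
  else if k = 2 then xg l i - hstep l
  else (ancList' l i).getD (k - 3) 0

/-- The polynomial degree `α_j = α_j(m,l_j) = min(m, l_j+1)`. -/
def deg (m l : ℕ) : ℕ := min m (l + 1)

/-- The univariate basis polynomial `φ^{α}_{l,i}` of degree `α = min(m, l+1)`. -/
def phi1 (m l i : ℕ) (x : ℝ) : ℝ :=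
  if x ∈ Set.Icc (xg l i - hstep l) (xg l i + hstep l) then
    ∏ k ∈ Finset.Icc 1 (deg m l), (x - node l i k) / (xg l i - node l i k)
  else 0

/-- The tensor-product basis function `φ^{α}_{l,i}(x) = ∏_j φ^{α_j}_{l_j,i_j}(x_j)`. -/
def phiT {d : ℕ} (m : ℕ) (l i : Fin d → ℕ) (x : Fin d → ℝ) : ℝ :=
  ∏ j, phi1 m (l j) (i j) (x j)

/-- The hierarchical index set `𝓘_l = {i : 1 ≤ i_j ≤ 2^{l_j} - 1, i_j odd}`. -/
def idxSet {d : ℕ} (l : Fin d → ℕ) : Finset (Fin d → ℕ) :=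
  (Fintype.piFinset fun j => Finset.range (2 ^ l j)).filter
    fun i => ∀ j, 1 ≤ i j ∧ i j ≤ 2 ^ l j - 1 ∧ i j % 2 = 1

/-- With the extra node `x_{l,i,α+1} := x_{l,i}`, the polynomial
`w_{l,i}(t) = ∏_{k=1}^{α+1} (t - x_{l,i,k})`. -/
def wPoly (m l i : ℕ) (t : ℝ) : ℝ :=
  ∏ k ∈ Finset.Icc 1 (deg m l + 1), (t - if k = deg m l + 1 then xg l i else node l i k)

/-- The node `x_{l,i,k}` for `1 ≤ k ≤ α+1`, where `x_{l,i,α+1} := x_{l,i}`. -/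
def wnode (m l i k : ℕ) : ℝ := if k = deg m l + 1 then xg l i else node l i k

/-- `s^α_{l,i}(t) = ∑_{k=1}^{α+1} σ(x_{l,i,k} - t)^α / w'_{l,i}(x_{l,i,k})`. -/
def sFun (m l i : ℕ) (t : ℝ) : ℝ :=
  ∑ k ∈ Finset.Icc 1 (deg m l + 1),
    relu (wnode m l i k - t) ^ deg m l / deriv (wPoly m l i) (wnode m l i k)

/-- The Peano kernel `g^{α}_{l,i}(x) = ∏_j w'_{l_j,i_j}(x_{l_j,i_j}) s^{α_j}_{l_j,i_j}(x_j)/α_j!`. -/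
def gFun {d : ℕ} (m : ℕ) (l i : Fin d → ℕ) (x : Fin d → ℝ) : ℝ :=
  ∏ j, deriv (wPoly m (l j) (i j)) (xg (l j) (i j)) * sFun m (l j) (i j) (x j) /
    (Nat.factorial (deg m (l j)) : ℝ)

/-- The unit cube `Ω = [0,1]^d`. -/
def cube (d : ℕ) : Set (Fin d → ℝ) := Set.Icc 0 1

/-- The partial derivative `∂f/∂x_j` (as a classical, everywhere-defined function). -/
def pd {d : ℕ} (j : Fin d) (f : (Fin d → ℝ) → ℝ) : (Fin d → ℝ) → ℝ :=
  fun x => fderiv ℝ f x (Pi.single j 1)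

/-- The mixed derivative `D^β f = ∂^{|β|₁} f / ∂x_1^{β_1} ⋯ ∂x_d^{β_d}`. -/
def mixDeriv {d : ℕ} (β : Fin d → ℕ) (f : (Fin d → ℝ) → ℝ) : (Fin d → ℝ) → ℝ :=
  (List.finRange d).foldr (fun j g => Nat.iterate (pd j) (β j) g) f

/-- Membership in the Korobov space `K^k_p(Ω)`: `f ∈ L_p(Ω)`, `f` vanishes on `∂Ω`, and
`D^β f ∈ L_p(Ω)` whenever `|β|_∞ ≤ k`. -/
def MemKorobov (d k : ℕ) (p : ℝ≥0∞) (f : (Fin d → ℝ) → ℝ) : Prop :=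
  MemLp f p (volume.restrict (cube d)) ∧
  (∀ x ∈ frontier (cube d), f x = 0) ∧
  ∀ β : Fin d → ℕ, (∀ j, β j ≤ k) → MemLp (mixDeriv β f) p (volume.restrict (cube d))

/-- The coefficient `v_{l,i} = ∫_Ω g^α_{l,i}(x) D^{α+1} f(x) dx`. -/
def vCoef {d : ℕ} (m : ℕ) (l i : Fin d → ℕ) (f : (Fin d → ℝ) → ℝ) : ℝ :=
  ∫ x in cube d, gFun m l i x * mixDeriv (fun j => deg m (l j) + 1) f x

/-- `c(α) = ∏_j 2^{α_j(α_j+1)/2}/(α_j+1)!`. -/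
def cAlpha {d : ℕ} (m : ℕ) (l : Fin d → ℕ) : ℝ :=
  ∏ j, (2 : ℝ) ^ (deg m (l j) * (deg m (l j) + 1) / 2) /
    (Nat.factorial (deg m (l j) + 1) : ℝ)



-- ===== auxiliary lemmas =====

/-- signed offset of the level-`l-s` ancestor. -/
def esgn (i s : ℕ) : ℤ := ((i % 2 ^ (s + 1) : ℕ) : ℤ) - 2 ^ s

/-- threshold reciprocal on ℤ. -/
def gq (e : ℤ) : ℝ := if 3 ≤ e then ((e : ℝ))⁻¹ else 0

/-- potential function. -/
def Hb (v : ℝ) : ℝ := 1 / v + 1 / (2 * v + 1) + 2 * (1 / (4 * v + 3))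

lemma gq_nonneg (e : ℤ) : 0 ≤ gq e := by
  unfold gq; split
  · have : (0:ℝ) < (e:ℝ) := by exact_mod_cast (by omega : (0:ℤ) < e)
    positivity
  · exact le_refl 0


lemma gq_neg {e : ℤ} (h : e < 3) : gq e = 0 := by
  unfold gq; rw [if_neg (by omega)]

lemma gq_pos {e : ℤ} (h : 3 ≤ e) : gq e = 1 / (e : ℝ) := by
  unfold gq; rw [if_pos h, one_div]

lemma Hb_anti {v w : ℝ} (h3 : 3 ≤ v) (hvw : v ≤ w) : Hb w ≤ Hb v := by
  unfold Hb
  gcongr <;> linarith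

lemma Hb_key {v : ℝ} (h3 : 3 ≤ v) : 1 / v + Hb (2 * v + 1) ≤ Hb v := by
  unfold Hb
  have h1 : (0:ℝ) < 4 * v + 3 := by linarith
  have h2 : (0:ℝ) < 8 * v + 7 := by linarith
  have key : 2 * (1 / (8 * v + 7)) ≤ 1 / (4 * v + 3) := by
    rw [mul_one_div, div_le_div_iff₀ h2 h1]; linarith
  have e1 : 2 * (2 * v + 1) + 1 = 4 * v + 3 := by ring
  have e2 : 4 * (2 * v + 1) + 3 = 8 * v + 7 := by ring
  rw [e1, e2]
  linarith [key]

lemma esgn_mod_eq {i i' s : ℕ} (h : i % 2 ^ (s + 1) = i' % 2 ^ (s + 1)) :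
    esgn i s = esgn i' s := by unfold esgn; rw [h]

/-- main inductive bound -/
lemma SL_aux : ∀ l, 1 ≤ l → ∀ i : ℕ, i % 2 = 1 → i < 2 ^ l →
    (∑ s ∈ Icc 1 (l - 1), gq (esgn i s)) + Hb (max (i : ℝ) 3) ≤ 64 / 105 := by
  intro l
  induction l with
  | zero => omega
  | succ l ih =>
    intro _ i hodd hi
    rcases Nat.eq_zero_or_pos l with rfl | hl
    · -- l+1 = 1, i = 1
      interval_cases i
      · omega
      · simp only [Nat.sub_self, Icc_eq_empty_of_lt (by norm_num : (0:ℕ) < 1), sum_empty,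
          zero_add, Nat.cast_one]
        have : max (1:ℝ) 3 = 3 := by norm_num
        rw [this]
        norm_num [Hb]
    · have hl1 : 1 ≤ l := hl
      set i' := i % 2 ^ l with hi'def
      have hmod : ∀ s, s + 1 ≤ l → esgn i s = esgn i' s := by
        intro s hs
        apply esgn_mod_eq
        rw [hi'def, Nat.mod_mod_of_dvd _ (pow_dvd_pow 2 hs)]
      have hi'odd : i' % 2 = 1 := by
        rw [hi'def, Nat.mod_mod_of_dvd _ (dvd_pow_self 2 (by omega : l ≠ 0))]; exact hodd
      have hi'lt : i' < 2 ^ l := Nat.mod_lt _ (by positivity)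
      have hi'ge : 1 ≤ i' := by omega
      have hIH := ih hl1 i' hi'odd hi'lt
      have hll : l - 1 + 1 = l := by omega
      have hsplit : ∑ s ∈ Icc 1 (l + 1 - 1), gq (esgn i s)
          = (∑ s ∈ Icc 1 (l - 1), gq (esgn i s)) + gq (esgn i l) := by
        have h0 : l + 1 - 1 = (l - 1) + 1 := by omega
        rw [h0, Finset.sum_Icc_succ_top (by omega), hll]
      have hsum_eq : ∑ s ∈ Icc 1 (l - 1), gq (esgn i s)
          = ∑ s ∈ Icc 1 (l - 1), gq (esgn i' s) := by
        apply Finset.sum_congr rfl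
        intro s hs
        rw [hmod s (by simp only [Finset.mem_Icc] at hs; omega)]
      have hesgnl : esgn i l = (i : ℤ) - 2 ^ l := by
        unfold esgn
        rw [Nat.mod_eq_of_lt hi]
      rw [hsplit, hsum_eq]
      by_cases hcase : i < 2 ^ l
      · -- high bit clear
        have hii : i' = i := Nat.mod_eq_of_lt hcase
        rw [hii] at hIH
        have hz : gq (esgn i l) = 0 := by
          apply gq_neg; rw [hesgnl]
          have : (i:ℤ) < 2 ^ l := by exact_mod_cast hcase
          omega
        rw [hz]; linarith
      · -- high bit set
        push_neg at hcase
        have hdm := Nat.div_add_mod i (2 ^ l)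
        have hdlt : i / 2 ^ l < 2 := Nat.div_lt_of_lt_mul (by rw [← pow_succ]; exact hi)
        have hdge : 1 ≤ i / 2 ^ l := (Nat.one_le_div_iff (by positivity)).2 hcase
        have hq : i / 2 ^ l = 1 := by omega
        have hnat : i = 2 ^ l + i' := by rw [hq] at hdm; omega
        have hieq : (i' : ℤ) = (i : ℤ) - 2 ^ l := by
          have : (i:ℤ) = 2 ^ l + i' := by exact_mod_cast hnat
          omega
        have hterm : gq (esgn i l) = gq (i' : ℤ) := by rw [hesgnl, ← hieq]
        rw [hterm]
        have hmax3 : (3:ℝ) ≤ max (i:ℝ) 3 := le_max_right _ _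
        have hstep : gq (i' : ℤ) + Hb (max (i:ℝ) 3) ≤ Hb (max (i':ℝ) 3) := by
          rcases (by omega : i' = 1 ∨ 3 ≤ i') with h1 | h3
          · have hz : gq ((i':ℕ) : ℤ) = 0 := gq_neg (by exact_mod_cast (by omega : (i':ℕ) < 3))
            rw [hz, zero_add]
            have hm1 : max ((i':ℕ):ℝ) 3 = 3 := by
              rw [max_eq_right]
              rw [h1]; norm_num
            rw [hm1]
            exact Hb_anti le_rfl hmax3
          · have h3R : (3:ℝ) ≤ (i':ℝ) := by exact_mod_cast h3
            have hmaxi' : max ((i':ℕ):ℝ) 3 = (i':ℝ) := max_eq_left h3R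
            have hi3 : (3:ℝ) ≤ (i:ℝ) := by
              have : (3:ℕ) ≤ i := by omega
              exact_mod_cast this
            have hmaxi : max ((i:ℕ):ℝ) 3 = (i:ℝ) := max_eq_left hi3
            rw [hmaxi', hmaxi]
            have hgq : gq ((i':ℕ):ℤ) = 1 / (i':ℝ) := by
              rw [gq_pos (by exact_mod_cast h3)]
              push_cast; ring
            rw [hgq]
            have hfar : 2 * (i':ℝ) + 1 ≤ (i:ℝ) := by
              have hi'lt' : (i':ℤ) < 2 ^ l := by exact_mod_cast hi'lt
              have : 2 * (i':ℤ) + 1 ≤ (i:ℤ) := by omega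
              exact_mod_cast this
            have hA := Hb_anti (by linarith : (3:ℝ) ≤ 2 * (i':ℝ) + 1) hfar
            have hK := Hb_key h3R
            linarith
        linarith

lemma SL_main {l i : ℕ} (hl : 1 ≤ l) (hodd : i % 2 = 1) (hi : i < 2 ^ l) :
    (∑ s ∈ Icc 1 (l - 1), gq (esgn i s)) + gq (i : ℤ) ≤ 64 / 105 := by
  have h := SL_aux l hl i hodd hi
  have hb : gq ((i:ℕ):ℤ) ≤ Hb (max (i:ℝ) 3) := by
    by_cases h3 : (3:ℤ) ≤ ((i:ℕ):ℤ)
    · rw [gq_pos h3]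
      have h3R : (3:ℝ) ≤ (i:ℝ) := by exact_mod_cast h3
      have hmx : max ((i:ℕ):ℝ) 3 = (i:ℝ) := max_eq_left h3R
      unfold Hb
      rw [hmx]
      have hc : ((i:ℤ):ℝ) = (i:ℝ) := by push_cast; ring
      rw [hc]
      have h1 : 0 ≤ 1 / (2 * (i:ℝ) + 1) := by positivity
      have h2 : 0 ≤ 2 * (1 / (4 * (i:ℝ) + 3)) := by positivity
      linarith
    · rw [gq_neg (by omega)]
      have hmax3 : (3:ℝ) ≤ max (i:ℝ) 3 := le_max_right _ _
      unfold Hb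
      have h1 : 0 ≤ 1 / max (i:ℝ) 3 := by positivity
      have h2 : 0 ≤ 1 / (2 * max (i:ℝ) 3 + 1) := by positivity
      have h3 : 0 ≤ 2 * (1 / (4 * max (i:ℝ) 3 + 3)) := by positivity
      linarith
  linarith

/-- real-valued threshold reciprocal -/
def prr (v : ℝ) : ℝ := if 3 ≤ v then v⁻¹ else 0

lemma prr_cast (e : ℤ) : prr ((e : ℤ) : ℝ) = gq e := by
  unfold prr gq
  by_cases h : (3:ℤ) ≤ e
  · rw [if_pos h, if_pos (by exact_mod_cast h)]
  · rw [if_neg h, if_neg (by exact_mod_cast h)]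

lemma prr_nonneg (v : ℝ) : 0 ≤ prr v := by
  unfold prr; split
  · have : (0:ℝ) < v := by linarith
    positivity
  · exact le_refl 0

lemma hstep_pos (l : ℕ) : 0 < hstep l := by unfold hstep; positivity

lemma hstep_ne (l : ℕ) : hstep l ≠ 0 := ne_of_gt (hstep_pos l)

lemma two_pow_hstep (l : ℕ) : ((2 ^ l : ℕ) : ℝ) * hstep l = 1 := by
  unfold hstep
  push_cast
  rw [← zpow_natCast (2:ℝ) l, ← zpow_add₀ (by norm_num : (2:ℝ) ≠ 0)]
  simp

/-- numerator of the level-(l-s) ancestor -/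
def numN (i s : ℕ) : ℕ := 2 ^ (s + 1) * (i / 2 ^ (s + 1)) + 2 ^ s

lemma numN_esgn (i s : ℕ) : ((numN i s : ℕ) : ℤ) = (i : ℤ) - esgn i s := by
  unfold numN esgn
  have h := Nat.div_add_mod i (2 ^ (s + 1))
  have hp : ((2^s : ℕ) : ℤ) = (2:ℤ)^s := by push_cast; ring
  omega

lemma numN_factor (i s : ℕ) : numN i s = 2 ^ s * (2 * (i / 2 ^ (s + 1)) + 1) := by
  unfold numN; rw [pow_succ]; ring

lemma numN_pos (i s : ℕ) : 0 < numN i s := by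
  unfold numN
  have := Nat.two_pow_pos s
  omega

lemma numN_lt {i s l : ℕ} (hi : i < 2 ^ l) (hs : s + 1 ≤ l) : numN i s < 2 ^ l := by
  have hKlt : i / 2 ^ (s + 1) < 2 ^ (l - s - 1) := by
    apply Nat.div_lt_of_lt_mul
    rw [← pow_add]
    have : s + 1 + (l - s - 1) = l := by omega
    rw [this]; exact hi
  have hK1 : i / 2 ^ (s + 1) + 1 ≤ 2 ^ (l - s - 1) := hKlt
  have h4 : 2 ^ (s + 1) * (i / 2 ^ (s + 1) + 1) ≤ 2 ^ (s + 1) * 2 ^ (l - s - 1) :=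
    Nat.mul_le_mul_left _ hK1
  rw [← pow_add] at h4
  have hle : s + 1 + (l - s - 1) = l := by omega
  rw [hle] at h4
  have h5 : 2 ^ (s + 1) = 2 ^ s * 2 := by rw [pow_succ]
  have h6 := Nat.two_pow_pos s
  unfold numN
  rw [Nat.mul_add, Nat.mul_one] at h4
  omega

lemma numN_inj {i s s' : ℕ} (h : s < s') : numN i s ≠ numN i s' := by
  intro he
  have h1 : numN i s % 2 ^ (s + 1) = 2 ^ s := by
    unfold numN
    rw [Nat.mul_add_mod]
    exact Nat.mod_eq_of_lt (by have := Nat.two_pow_pos s; rw [pow_succ]; omega)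
  have hdvd : 2 ^ (s + 1) ∣ numN i s' := by
    rw [numN_factor]
    exact Dvd.dvd.mul_right (pow_dvd_pow 2 (by omega)) _
  have h2 : numN i s' % 2 ^ (s + 1) = 0 := Nat.mod_eq_zero_of_dvd hdvd
  rw [he, h2] at h1
  have := Nat.two_pow_pos s
  omega

lemma ancAt_eq {l i lp : ℕ} (h1 : 1 ≤ lp) (h2 : lp < l) :
    ancAt l i lp = ((numN i (l - lp) : ℕ) : ℝ) * hstep l := by
  unfold ancAt
  set s := l - lp with hs
  have hs1 : 1 ≤ s := by omega
  have hh : hstep lp = ((2 ^ s : ℕ) : ℝ) * hstep l := by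
    unfold hstep
    push_cast
    rw [← zpow_natCast (2:ℝ) s, ← zpow_add₀ (by norm_num : (2:ℝ) ≠ 0)]
    congr 1; omega
  have hdd : i / 2 ^ (s + 1) = i / 2 ^ s / 2 := by
    rw [Nat.div_div_eq_div_mul, ← pow_succ]
  rw [hh]
  by_cases hq : (i / 2 ^ s) % 2 = 1
  · rw [if_pos hq]
    have hnum : i / 2 ^ s * 2 ^ s = numN i s := by
      rw [numN_factor, hdd]
      set K := i / 2 ^ s / 2 with hK
      rw [show i / 2 ^ s = 2 * K + 1 from by omega]
      ring
    rw [← hnum]; push_cast; ring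
  · rw [if_neg hq]
    have hnum : (i / 2 ^ s + 1) * 2 ^ s = numN i s := by
      rw [numN_factor, hdd]
      set K := i / 2 ^ s / 2 with hK
      rw [show i / 2 ^ s + 1 = 2 * K + 1 from by omega]
      ring
    rw [← hnum]; push_cast; ring

lemma ancList_mapval {l i : ℕ} (t : ℕ) (ht : t < l - 1) :
    ancAt l i (l - 1 - t) = ((numN i (t + 1) : ℕ) : ℝ) * hstep l := by
  rw [ancAt_eq (by omega) (by omega), show l - (l - 1 - t) = t + 1 from by omega]

lemma ancList_nodup {l i : ℕ} (hl : 1 ≤ l) (hi : i < 2 ^ l) : (ancList l i).Nodup := by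
  unfold ancList
  apply List.Nodup.append
  · apply List.Nodup.map_on _ List.nodup_range
    intro t ht t' ht' heq
    rw [List.mem_range] at ht ht'
    rw [ancList_mapval t ht, ancList_mapval t' ht'] at heq
    have heqn : numN i (t + 1) = numN i (t' + 1) := by
      have := mul_right_cancel₀ (hstep_ne l) heq
      exact_mod_cast this
    by_contra hne
    rcases Nat.lt_or_ge t t' with h | h
    · exact numN_inj (by omega) heqn
    · exact numN_inj (by omega) heqn.symm
  · simp
  · intro a ha hmem
    obtain ⟨t, ht, rfl⟩ := List.mem_map.1 ha
    rw [List.mem_range] at ht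
    rw [ancList_mapval t ht] at hmem
    have hpos : (0:ℝ) < ((numN i (t+1) : ℕ) : ℝ) * hstep l := by
      apply mul_pos _ (hstep_pos l)
      exact_mod_cast numN_pos i (t+1)
    simp only [List.mem_cons, List.not_mem_nil, or_false] at hmem
    rcases hmem with h0 | h1
    · linarith [h0]
    · rw [← two_pow_hstep l] at h1
      have := mul_right_cancel₀ (hstep_ne l) h1
      have hn : numN i (t+1) = 2 ^ l := by exact_mod_cast this
      have := numN_lt hi (show t + 1 + 1 ≤ l by omega)
      omega

lemma filter_len_ge {L : List ℝ} (hnd : L.Nodup) (f : ℝ → Bool) (v1 v2 : ℝ)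
    (hf : ∀ a ∈ L, f a = false → a = v1 ∨ a = v2) :
    L.length - 2 ≤ (L.filter f).length := by
  classical
  have hsplit := List.length_eq_length_filter_add (l := L) f
  have hbadnd : (L.filter (fun x => !f x)).Nodup := List.filter_sublist.nodup hnd
  have hbadsub : (L.filter (fun x => !f x)).toFinset ⊆ ({v1, v2} : Finset ℝ) := by
    intro a ha
    rw [List.mem_toFinset, List.mem_filter] at ha
    obtain ⟨hmem, hpa⟩ := ha
    rw [Bool.not_eq_true'] at hpa
    simp only [Finset.mem_insert, Finset.mem_singleton]
    exact hf a hmem hpa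
  have hbadlen : (L.filter (fun x => !f x)).length ≤ 2 := by
    rw [← List.toFinset_card_of_nodup hbadnd]
    calc (L.filter (fun x => !f x)).toFinset.card
        ≤ ({v1, v2} : Finset ℝ).card := Finset.card_le_card hbadsub
      _ ≤ 2 := Finset.card_insert_le _ _ |>.trans (by simp)
  omega

lemma ancList'_length {l i : ℕ} (hl : 1 ≤ l) (hi : i < 2 ^ l) :
    l - 1 ≤ (ancList' l i).length := by
  have hnd := ancList_nodup hl hi
  have hlen : (ancList l i).length = l + 1 := by
    unfold ancList
    simp [List.length_append, List.length_map, List.length_range]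
    omega
  unfold ancList'
  have hkey := filter_len_ge hnd
    (fun a => decide (a ≠ xg l i + hstep l ∧ a ≠ xg l i - hstep l))
    (xg l i + hstep l) (xg l i - hstep l) ?_
  · omega
  · intro a _ hfa
    rw [decide_eq_false_iff_not] at hfa
    push_neg at hfa
    by_cases h : a = xg l i + hstep l
    · exact Or.inl h
    · exact Or.inr (hfa h)

lemma esgn_odd {i s : ℕ} (hodd : i % 2 = 1) (hs : 1 ≤ s) : esgn i s % 2 = 1 := by
  unfold esgn
  have h1 : i % 2 ^ (s + 1) % 2 = 1 := by
    rw [Nat.mod_mod_of_dvd _ (dvd_pow_self 2 (by omega))]; exact hodd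
  have hp : ((2 ^ s : ℕ) : ℤ) = (2:ℤ) ^ s := by push_cast; ring
  have h2 : (2 ^ s : ℕ) % 2 = 0 := Nat.mod_eq_zero_of_dvd (dvd_pow_self 2 (by omega))
  omega

lemma ancList'_elem {l i : ℕ} (hl : 1 ≤ l) (hodd : i % 2 = 1) (hi : i < 2 ^ l) :
    ∀ a ∈ ancList' l i, ∃ e : ℤ, (3 ≤ e ∨ e ≤ -3) ∧ a = ((i : ℝ) - (e : ℝ)) * hstep l := by
  intro a ha
  unfold ancList' at ha
  rw [List.mem_filter, decide_eq_true_eq] at ha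
  obtain ⟨haL, hp1, hp2⟩ := ha
  have hxg : xg l i = (i : ℝ) * hstep l := rfl
  unfold ancList at haL
  rcases List.mem_append.1 haL with hmem | hmem
  · obtain ⟨t, ht, rfl⟩ := List.mem_map.1 hmem
    rw [List.mem_range] at ht
    rw [ancList_mapval t ht] at hp1 hp2 ⊢
    set E := esgn i (t + 1) with hE
    have hvalE : ((numN i (t+1) : ℕ) : ℝ) = (i : ℝ) - (E : ℝ) := by
      exact_mod_cast congrArg (Int.cast : ℤ → ℝ) (numN_esgn i (t + 1))
    have hEodd : E % 2 = 1 := esgn_odd hodd (by omega)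
    have hne1 : E ≠ 1 := by
      intro h
      apply hp2
      rw [hvalE, h, hxg]
      push_cast
      ring
    have hnem1 : E ≠ -1 := by
      intro h
      apply hp1
      rw [hvalE, h, hxg]
      push_cast
      ring
    exact ⟨E, by omega, by rw [hvalE]⟩
  · simp only [List.mem_cons, List.mem_singleton, List.not_mem_nil, or_false] at hmem
    rcases hmem with rfl | rfl
    · refine ⟨(i : ℤ), ?_, by push_cast; ring⟩
      have hne : i ≠ 1 := by
        intro h
        apply hp2
        rw [hxg, h]
        push_cast
        ring
      left
      omega
    · have h2l : ((2 ^ l : ℕ) : ℤ) = (2:ℤ) ^ l := by push_cast; ring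
      refine ⟨(i : ℤ) - 2 ^ l, ?_, ?_⟩
      · have h2even : 2 ^ l % 2 = 0 := Nat.mod_eq_zero_of_dvd (dvd_pow_self 2 (by omega))
        have hne : i + 1 ≠ 2 ^ l := by
          intro h
          apply hp1
          rw [hxg, ← two_pow_hstep l, ← h]
          push_cast
          ring
        right
        omega
      · rw [← two_pow_hstep l]
        push_cast
        ring

lemma list_filter_map_sum (L : List ℝ) (f : ℝ → Bool) (g : ℝ → ℝ) :
    ((L.filter f).map g).sum = (L.map (fun a => if f a then g a else 0)).sum := by
  induction L with
  | nil => simp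
  | cons a L ih =>
    by_cases h : f a <;> simp [List.filter_cons, h, ih]

lemma list_range_map_sum (n : ℕ) (F : ℕ → ℝ) :
    ((List.range n).map F).sum = ∑ t ∈ Finset.range n, F t := by
  induction n with
  | zero => simp
  | succ n ih =>
    rw [List.range_succ, Finset.sum_range_succ, List.map_append, List.sum_append, ih]
    simp

lemma mod_mirror {M a b : ℕ} (hM : 0 < M) (hdvd : M ∣ a) (hb : b ≤ a) (hb0 : b % M ≠ 0) :
    (a - b) % M = M - b % M := by
  have hrlt : b % M < M := Nat.mod_lt _ hM
  have hXlt : (a - b) % M < M := Nat.mod_lt _ hM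
  have hsum : ((a - b) % M + b % M) % M = 0 := by
    rw [← Nat.add_mod, Nat.sub_add_cancel hb]
    exact Nat.mod_eq_zero_of_dvd hdvd
  obtain ⟨c, hc⟩ := Nat.dvd_of_mod_eq_zero hsum
  have hc2 : c < 2 := by
    by_contra hcon
    push_neg at hcon
    have : M * 2 ≤ M * c := Nat.mul_le_mul_left M hcon
    omega
  have hc1 : c ≠ 0 := by
    rintro rfl
    omega
  have hceq : c = 1 := by omega
  rw [hceq, Nat.mul_one] at hc
  omega

lemma esgn_mirror {l i s : ℕ} (hodd : i % 2 = 1) (hi : i < 2 ^ l) (hs : s + 1 ≤ l) :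
    esgn (2 ^ l - i) s = - esgn i s := by
  unfold esgn
  have hb0 : i % 2 ^ (s + 1) ≠ 0 := by
    have : i % 2 ^ (s + 1) % 2 = 1 := by
      rw [Nat.mod_mod_of_dvd _ (dvd_pow_self 2 (by omega))]; exact hodd
    omega
  have h1 : (2 ^ l - i) % 2 ^ (s + 1) = 2 ^ (s + 1) - i % 2 ^ (s + 1) :=
    mod_mirror (Nat.two_pow_pos _) (pow_dvd_pow 2 hs) (le_of_lt hi) hb0
  rw [h1]
  have h2 : i % 2 ^ (s + 1) ≤ 2 ^ (s + 1) := le_of_lt (Nat.mod_lt _ (Nat.two_pow_pos _))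
  have hps : ((2 ^ s : ℕ) : ℤ) = (2:ℤ) ^ s := by push_cast; ring
  have hps1 : ((2 ^ (s+1) : ℕ) : ℤ) = (2:ℤ) ^ (s+1) := by push_cast; ring
  have hrel : (2:ℤ) ^ (s + 1) = 2 * 2 ^ s := by rw [pow_succ]; ring
  omega

lemma gq_neg' {e : ℤ} (h : e < 3) : gq e = 0 := by
  unfold gq; rw [if_neg (by omega)]

lemma SL_side {l i : ℕ} (hl : 1 ≤ l) (hodd : i % 2 = 1) (hi : i < 2 ^ l) (σ : ℤ)
    (hσ : σ = 1 ∨ σ = -1) :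
    (∑ s ∈ Icc 1 (l - 1), gq (σ * esgn i s)) + gq (σ * (i : ℤ))
      + gq (σ * ((i : ℤ) - 2 ^ l)) ≤ 64 / 105 := by
  have h2l : ((2 ^ l : ℕ) : ℤ) = (2:ℤ) ^ l := by push_cast; ring
  have hilt : (i : ℤ) < (2:ℤ) ^ l := by rw [← h2l]; exact_mod_cast hi
  rcases hσ with rfl | rfl
  · simp only [one_mul]
    have hz : gq ((i:ℤ) - 2 ^ l) = 0 := gq_neg' (by omega)
    rw [hz, add_zero]
    exact SL_main hl hodd hi
  · have hi1 : 1 ≤ i := by omega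
    have h2even : 2 ^ l % 2 = 0 := Nat.mod_eq_zero_of_dvd (dvd_pow_self 2 (by omega))
    have hmodd : (2 ^ l - i) % 2 = 1 := by omega
    have hmlt : 2 ^ l - i < 2 ^ l := by have := Nat.two_pow_pos l; omega
    have hmain := SL_main hl hmodd hmlt
    have hsum : ∑ s ∈ Icc 1 (l - 1), gq (-1 * esgn i s)
        = ∑ s ∈ Icc 1 (l - 1), gq (esgn (2 ^ l - i) s) := by
      apply Finset.sum_congr rfl
      intro s hs
      rw [Finset.mem_Icc] at hs
      rw [esgn_mirror hodd hi (by omega), neg_one_mul]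
    have he1 : gq (-1 * (i : ℤ)) = 0 := gq_neg' (by omega)
    have he2 : gq (-1 * ((i : ℤ) - 2 ^ l)) = gq ((2 ^ l - i : ℕ) : ℤ) := by
      congr 1
      have : ((2 ^ l - i : ℕ) : ℤ) = ((2 ^ l : ℕ) : ℤ) - (i : ℤ) :=
        Int.ofNat_sub (le_of_lt hi)
      rw [this, h2l]
      ring
    rw [hsum, he1, he2, add_zero]
    linarith [hmain]

open Classical in
lemma term_eq {l i : ℕ} (σ : ℤ) (hσ : σ = 1 ∨ σ = -1) (e : ℤ) (a : ℝ)
    (hval : a = ((i : ℝ) - (e : ℝ)) * hstep l) :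
    (if decide (a ≠ xg l i + hstep l ∧ a ≠ xg l i - hstep l) = true then
      prr (((σ : ℤ) : ℝ) * ((xg l i - a) / hstep l)) else 0) = gq (σ * e) := by
  have hxg : xg l i = (i : ℝ) * hstep l := rfl
  have hfrac : (xg l i - a) / hstep l = (e : ℝ) := by
    rw [hval, hxg, div_eq_iff (hstep_ne l)]
    ring
  have hσ1 : gq σ = 0 := by rcases hσ with rfl | rfl <;> exact gq_neg' (by omega)
  by_cases h1 : e = 1
  · rw [if_neg, h1, mul_one, hσ1]
    simp only [decide_eq_true_eq]
    intro ⟨hA, hB⟩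
    apply hB
    rw [hval, h1, hxg]
    push_cast
    ring
  · by_cases h2 : e = -1
    · rw [if_neg, h2]
      · have he : σ * -1 = -σ := by ring
        rw [he]
        rcases hσ with rfl | rfl <;> exact (gq_neg' (by omega)).symm
      · simp only [decide_eq_true_eq]
        intro ⟨hA, hB⟩
        apply hA
        rw [hval, h2, hxg]
        push_cast
        ring
    · rw [if_pos, hfrac]
      · rw [show ((σ:ℤ):ℝ) * ((e:ℤ):ℝ) = ((σ * e : ℤ) : ℝ) from by push_cast; ring, prr_cast]
      · rw [decide_eq_true_eq]
        constructor
        · intro hcon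
          apply h2
          rw [hval, hxg] at hcon
          have hcc : ((i:ℝ) - (e:ℝ)) * hstep l = ((i:ℝ) - (-1)) * hstep l := by
            rw [hcon]; ring
          have hc2 := mul_right_cancel₀ (hstep_ne l) hcc
          have : (e:ℝ) = -1 := by linarith
          exact_mod_cast this
        · intro hcon
          apply h1
          rw [hval, hxg] at hcon
          have hcc : ((i:ℝ) - (e:ℝ)) * hstep l = ((i:ℝ) - 1) * hstep l := by
            rw [hcon]; ring
          have hc2 := mul_right_cancel₀ (hstep_ne l) hcc
          have : (e:ℝ) = 1 := by linarith
          exact_mod_cast this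

open Classical in
lemma budget_sum {l i : ℕ} (hl : 1 ≤ l) (hodd : i % 2 = 1) (hi : i < 2 ^ l) (σ : ℤ)
    (hσ : σ = 1 ∨ σ = -1) :
    ((ancList' l i).map (fun a => prr (((σ : ℤ) : ℝ) * ((xg l i - a) / hstep l)))).sum
      ≤ 64 / 105 := by
  unfold ancList'
  rw [list_filter_map_sum]
  unfold ancList
  rw [List.map_append, List.map_map, List.sum_append, list_range_map_sum]
  have hrange : ∑ t ∈ Finset.range (l - 1),
      ((fun a => if decide (a ≠ xg l i + hstep l ∧ a ≠ xg l i - hstep l) = true then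
        prr (((σ : ℤ) : ℝ) * ((xg l i - a) / hstep l)) else 0) ∘ fun t => ancAt l i (l - 1 - t)) t
      = ∑ t ∈ Finset.range (l - 1), gq (σ * esgn i (t + 1)) := by
    apply Finset.sum_congr rfl
    intro t ht
    rw [Finset.mem_range] at ht
    have hval : ancAt l i (l - 1 - t) = ((i : ℝ) - ((esgn i (t + 1) : ℤ) : ℝ)) * hstep l := by
      rw [ancList_mapval t ht]
      have := numN_esgn i (t + 1)
      have hc : ((numN i (t + 1) : ℕ) : ℝ) = (((i : ℤ) - esgn i (t + 1) : ℤ) : ℝ) := by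
        exact_mod_cast congrArg (Int.cast : ℤ → ℝ) this
      rw [hc]
      push_cast
      ring
    exact term_eq σ hσ (esgn i (t + 1)) _ hval
  rw [hrange]
  have hterm0 := term_eq (l := l) (i := i) σ hσ (i : ℤ) 0 (by push_cast; ring)
  have hterm1 := term_eq (l := l) (i := i) σ hσ ((i : ℤ) - 2 ^ l) 1
    (by rw [← two_pow_hstep l]; push_cast; ring)
  have hends : ((([0, 1] : List ℝ)).map (fun a =>
      if decide (a ≠ xg l i + hstep l ∧ a ≠ xg l i - hstep l) = true then
        prr (((σ : ℤ) : ℝ) * ((xg l i - a) / hstep l)) else 0)).sum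
      = gq (σ * (i : ℤ)) + gq (σ * ((i : ℤ) - 2 ^ l)) := by
    simp only [List.map_cons, List.map_nil, List.sum_cons, List.sum_nil, add_zero]
    rw [hterm0, hterm1]
  have hIcc : ∑ s ∈ Icc 1 (l - 1), gq (σ * esgn i s)
      = ∑ t ∈ Finset.range (l - 1), gq (σ * esgn i (t + 1)) := by
    rw [← Finset.Ico_add_one_right_eq_Icc, show (l - 1) + 1 = l from by omega,
      Finset.sum_Ico_eq_sum_range]
    apply Finset.sum_congr rfl
    intro t _
    rw [Nat.add_comm]
  have hside := SL_side hl hodd hi σ hσ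
  rw [hends, ← hIcc]
  linarith [hside]

lemma elem_bound {E t σ : ℝ} (hσ : σ = 1 ∨ σ = -1) (ht0 : 0 ≤ t) (ht1 : t ≤ 1)
    (hE : 3 ≤ σ * E ∨ σ * E ≤ -3) :
    |(σ * t + E) / E| ≤ 1 + t * prr (σ * E) := by
  rcases hσ with rfl | rfl
  · simp only [one_mul] at hE ⊢
    rcases hE with h | h
    · have hE0 : (0:ℝ) < E := by linarith
      rw [show prr E = E⁻¹ from if_pos h]
      have hq : (t + E) / E = 1 + t * E⁻¹ := by field_simp; ring
      rw [hq, abs_of_nonneg (by positivity)]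
    · have hE0 : E < 0 := by linarith
      rw [show prr E = 0 from if_neg (by linarith), mul_zero, add_zero]
      rw [abs_div, abs_of_nonpos (by linarith : t + E ≤ 0), abs_of_nonpos (by linarith : E ≤ 0),
        div_le_one (by linarith : (0:ℝ) < -E)]
      linarith
  · simp only [neg_one_mul] at hE ⊢
    rcases hE with h | h
    · have hE0 : E < 0 := by linarith
      rw [show prr (-E) = (-E)⁻¹ from if_pos h]
      have hq : (-t + E) / E = 1 + t * (-E)⁻¹ := by
        have hne : E ≠ 0 := by linarith
        field_simp
        ring
      rw [hq, abs_of_nonneg (by positivity)]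
    · have hE0 : (0:ℝ) < E := by linarith
      rw [show prr (-E) = 0 from if_neg (by linarith), mul_zero, add_zero]
      rw [abs_div, abs_of_nonneg (by linarith : 0 ≤ -t + E), abs_of_nonneg (by linarith : 0 ≤ E),
        div_le_one hE0]
      linarith

lemma prod_getD_le (G w : ℝ → ℝ) : ∀ (L : List ℝ) (n : ℕ), n ≤ L.length →
    (∀ a ∈ L, 0 ≤ w a ∧ |G a| ≤ 1 + w a) → (L.map w).sum < 1 →
    (∏ t ∈ Finset.range n, |G (L.getD t 0)|) ≤ (1 - (L.map w).sum)⁻¹ := by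
  intro L
  induction L with
  | nil =>
    intro n hn _ _
    have hn0 : n = 0 := by simpa using hn
    subst hn0
    simp
  | cons a L ih =>
    intro n hn hB hs
    have hsum_nonneg : 0 ≤ (L.map w).sum := by
      apply List.sum_nonneg
      intro x hx
      obtain ⟨b, hb, rfl⟩ := List.mem_map.1 hx
      exact (hB b (List.mem_cons_of_mem a hb)).1
    have hwa := hB a List.mem_cons_self
    have hS : (List.map w (a :: L)).sum = w a + (L.map w).sum := by simp
    rw [hS] at hs ⊢
    have hSL_lt : (L.map w).sum < 1 := by linarith [hwa.1]
    have hpos : 0 < 1 - (w a + (L.map w).sum) := by linarith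
    have hposL : 0 < 1 - (L.map w).sum := by linarith
    match n with
    | 0 =>
      rw [Finset.range_zero, Finset.prod_empty]
      rw [le_inv_comm₀ (by norm_num) hpos]
      linarith [hwa.1]
    | Nat.succ n =>
      rw [Finset.prod_range_succ']
      have hgets : ∀ t : ℕ, (a :: L).getD (t + 1) 0 = L.getD t 0 := fun t => rfl
      have hget0 : (a :: L).getD 0 0 = a := rfl
      simp only [hgets, hget0]
      have hIH := ih n (by simpa using hn) (fun b hb => hB b (List.mem_cons_of_mem a hb)) hSL_lt
      have hmul : (∏ t ∈ Finset.range n, |G (L.getD t 0)|) * |G a|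
          ≤ (1 - (L.map w).sum)⁻¹ * (1 + w a) :=
        mul_le_mul hIH hwa.2 (abs_nonneg _) (by positivity)
      refine hmul.trans ?_
      rw [inv_mul_eq_div, div_le_iff₀ hposL, inv_mul_eq_div, le_div_iff₀ hpos]
      nlinarith [hwa.1, hsum_nonneg, sq_nonneg (w a)]

set_option maxHeartbeats 2000000 in
lemma phi1_bound {m l i : ℕ} (hm : 2 ≤ m) (hl : 1 ≤ l) (hodd : i % 2 = 1) (hi : i < 2 ^ l)
    (x : ℝ) : |phi1 m l i x| ≤ 1.117 := by
  unfold phi1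
  split
  case isFalse => norm_num
  case isTrue hx =>
    have hh : 0 < hstep l := hstep_pos l
    set h := hstep l with hhdef
    set c := xg l i with hc
    set u := (x - c) / h with hu
    have hxc : x - c = u * h := by rw [hu]; field_simp
    obtain ⟨hx1, hx2⟩ := hx
    have hum : -1 ≤ u := by rw [hu, le_div_iff₀ hh]; linarith
    have hup : u ≤ 1 := by rw [hu, div_le_iff₀ hh]; linarith
    have hα2 : 2 ≤ deg m l := le_min hm (by omega)
    have hαl : deg m l ≤ l + 1 := min_le_right _ _
    -- split off first two factors
    have hsetsplit : Finset.Icc 1 (deg m l) = insert 1 (insert 2 (Finset.Icc 3 (deg m l))) := by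
      ext k
      simp only [Finset.mem_Icc, Finset.mem_insert]
      omega
    rw [hsetsplit, Finset.prod_insert (by simp only [Finset.mem_insert, Finset.mem_Icc]; omega),
      Finset.prod_insert (by simp only [Finset.mem_Icc]; omega)]
    have hnode1 : node l i 1 = c + h := by unfold node; simp [hc, hhdef]
    have hnode2 : node l i 2 = c - h := by unfold node; norm_num [hc, hhdef]
    have hf1 : (x - node l i 1) / (c - node l i 1) = 1 - u := by
      rw [hnode1, show c - (c + h) = -h from by ring,
        div_eq_iff (neg_ne_zero.2 (ne_of_gt hh))]
      linear_combination hxc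
    have hf2 : (x - node l i 2) / (c - node l i 2) = 1 + u := by
      rw [hnode2, show c - (c - h) = h from by ring, div_eq_iff (ne_of_gt hh)]
      linear_combination hxc
    rw [hf1, hf2]
    -- sign
    set σ : ℤ := if 0 ≤ u then 1 else -1 with hσdef
    have hσ : σ = 1 ∨ σ = -1 := by unfold σ; split <;> simp
    have huσ : u = ((σ:ℤ):ℝ) * |u| := by
      unfold σ
      split
      · rw [abs_of_nonneg (by assumption)]; push_cast; ring
      · rw [abs_of_neg (by linarith [lt_of_not_ge (by assumption : ¬ 0 ≤ u)])]
        push_cast; ring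
    have ht0 : 0 ≤ |u| := abs_nonneg u
    have ht1 : |u| ≤ 1 := abs_le.2 ⟨hum, hup⟩
    -- the rest product
    set G : ℝ → ℝ := fun a => (x - a) / (c - a) with hG
    set wf : ℝ → ℝ := fun a => |u| * prr (((σ:ℤ):ℝ) * ((c - a) / h)) with hwf
    have hWsum : ((ancList' l i).map wf).sum = |u| *
        ((ancList' l i).map (fun a => prr (((σ:ℤ):ℝ) * ((xg l i - a) / hstep l)))).sum := by
      rw [← List.sum_map_mul_left]
    have hbudget := budget_sum hl hodd hi σ hσ
    have hbnonneg : 0 ≤ ((ancList' l i).map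
        (fun a => prr (((σ:ℤ):ℝ) * ((xg l i - a) / hstep l)))).sum := by
      apply List.sum_nonneg
      intro y hy
      obtain ⟨b, hb, rfl⟩ := List.mem_map.1 hy
      exact prr_nonneg _
    have hWle : ((ancList' l i).map wf).sum ≤ 64 / 105 * |u| := by
      rw [hWsum]
      calc |u| * _ ≤ |u| * (64 / 105) := by
            apply mul_le_mul_of_nonneg_left hbudget ht0
        _ = 64 / 105 * |u| := by ring
    have hWlt : ((ancList' l i).map wf).sum < 1 := by
      have : 64 / 105 * |u| < 1 := by nlinarith
      linarith
    have hElems : ∀ a ∈ ancList' l i, 0 ≤ wf a ∧ |G a| ≤ 1 + wf a := by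
      intro a ha
      obtain ⟨e, he3, hval⟩ := ancList'_elem hl hodd hi a ha
      rw [← hhdef] at hval
      have hxg2 : xg l i = (i : ℝ) * h := rfl
      have hE0 : (e:ℝ) ≠ 0 := by
        have : e ≠ 0 := by omega
        exact_mod_cast this
      have hca : c - a = (e:ℝ) * h := by
        rw [hc, hxg2, hval]
        ring
      have hxa : x - a = (((σ:ℤ):ℝ) * |u| + (e:ℝ)) * h := by
        rw [hval, ← huσ]
        have hceq : c = (i : ℝ) * h := by rw [hc, hxg2]
        linear_combination hxc + hceq
      have hGa : G a = (((σ:ℤ):ℝ) * |u| + (e:ℝ)) / (e:ℝ) := by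
        show (x - a) / (c - a) = _
        rw [hxa, hca, mul_div_mul_right _ _ (by rw [hhdef]; exact hstep_ne l)]
      have hwfa : wf a = |u| * prr (((σ:ℤ):ℝ) * (e:ℝ)) := by
        show |u| * prr (((σ:ℤ):ℝ) * ((c - a) / h)) = _
        rw [hca, mul_div_assoc, div_self (by rw [hhdef]; exact hstep_ne l), mul_one]
      have hσR : ((σ:ℤ):ℝ) = 1 ∨ ((σ:ℤ):ℝ) = -1 := by
        rcases hσ with hs | hs <;> rw [hs]
        · left; norm_num
        · right; push_cast; ring
      have heR : (3:ℝ) ≤ (e:ℝ) ∨ (e:ℝ) ≤ -3 := by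
        rcases he3 with h3 | h3
        · left; exact_mod_cast h3
        · right; exact_mod_cast h3
      have hEcond : 3 ≤ ((σ:ℤ):ℝ) * (e:ℝ) ∨ ((σ:ℤ):ℝ) * (e:ℝ) ≤ -3 := by
        rcases hσR with hs | hs <;> rw [hs] <;>
          simp only [one_mul, neg_one_mul] <;> rcases heR with h3 | h3
        · left; linarith
        · right; linarith
        · right; linarith
        · left; linarith
      constructor
      · rw [hwfa]
        exact mul_nonneg ht0 (prr_nonneg _)
      · rw [hGa, hwfa]
        exact elem_bound hσR ht0 ht1 hEcond
    -- reindex the tail product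
    have hnlen : deg m l - 2 ≤ (ancList' l i).length := by
      have := ancList'_length hl hi
      omega
    have hreidx : ∏ k ∈ Finset.Icc 3 (deg m l), (x - node l i k) / (c - node l i k)
        = ∏ t ∈ Finset.range (deg m l - 2), G ((ancList' l i).getD t 0) := by
      rw [← Finset.Ico_add_one_right_eq_Icc, Finset.prod_Ico_eq_prod_range,
        show deg m l + 1 - 3 = deg m l - 2 from by omega]
      apply Finset.prod_congr rfl
      intro t _
      have hnode : node l i (3 + t) = (ancList' l i).getD t 0 := by
        unfold node
        rw [if_neg (by omega), if_neg (by omega), show 3 + t - 3 = t from by omega]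
      rw [hnode]
    have habs : |∏ t ∈ Finset.range (deg m l - 2), G ((ancList' l i).getD t 0)|
        = ∏ t ∈ Finset.range (deg m l - 2), |G ((ancList' l i).getD t 0)| :=
      Finset.abs_prod _ _
    have hrest := prod_getD_le G wf (ancList' l i) (deg m l - 2) hnlen hElems hWlt
    -- final combination
    have hWpos : 0 < 1 - 64 / 105 * |u| := by nlinarith
    have hmono : (1 - ((ancList' l i).map wf).sum)⁻¹ ≤ (1 - 64 / 105 * |u|)⁻¹ := by
      apply inv_anti₀ hWpos
      linarith [hWle]
    have hrest2 : |∏ t ∈ Finset.range (deg m l - 2), G ((ancList' l i).getD t 0)|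
        ≤ (1 - 64 / 105 * |u|)⁻¹ := by
      rw [habs]
      exact hrest.trans hmono
    have h1u : |1 - u| = 1 - u := abs_of_nonneg (by linarith)
    have h2u : |1 + u| = 1 + u := abs_of_nonneg (by linarith)
    rw [abs_mul, abs_mul, hreidx, h1u, h2u]
    set P := |∏ t ∈ Finset.range (deg m l - 2), G ((ancList' l i).getD t 0)| with hPdef
    have hrest3 : P ≤ (1 - 64 / 105 * |u|)⁻¹ := hrest2
    have hPnn : 0 ≤ P := abs_nonneg _
    clear_value P G wf σ u c h
    have hfinal : (1 - |u| ^ 2) * (1 - 64 / 105 * |u|)⁻¹ ≤ 1.117 := by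
      rw [mul_inv_le_iff₀ hWpos]
      nlinarith [sq_nonneg (|u| - 17/50), ht1, ht0]
    have husq : (1 - u) * (1 + u) = 1 - |u| ^ 2 := by rw [sq_abs]; ring
    have hsqnn : 0 ≤ 1 - |u| ^ 2 := by nlinarith [ht1, ht0]
    calc (1 - u) * ((1 + u) * P) = ((1 - u) * (1 + u)) * P := by ring
      _ = (1 - |u| ^ 2) * P := by rw [husq]
      _ ≤ (1 - |u| ^ 2) * (1 - 64 / 105 * |u|)⁻¹ := mul_le_mul_of_nonneg_left hrest3 hsqnn
      _ ≤ 1.117 := hfinal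


lemma phi1_zero {m l i : ℕ} (x : ℝ)
    (hx : x ∉ Set.Icc (xg l i - hstep l) (xg l i + hstep l)) : phi1 m l i x = 0 := by
  unfold phi1
  rw [if_neg hx]

lemma myRpowSum {d : ℕ} (f : Fin d → ℝ) :
    (2:ℝ) ^ (∑ j, f j) = ∏ j, (2:ℝ) ^ (f j) := by
  classical
  induction (Finset.univ : Finset (Fin d)) using Finset.induction with
  | empty => simp
  | insert _ _ hnotmem ih =>
    rw [Finset.sum_insert hnotmem, Finset.prod_insert hnotmem, Real.rpow_add (by norm_num), ih]

theorem stmt1 (d m : ℕ) (hd : 0 < d) (hm : 2 ≤ m)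
    (l i : Fin d → ℕ) (hl : ∀ j, 1 ≤ l j) (hi : i ∈ idxSet l)
    (p : ℝ≥0∞) (hp : 1 ≤ p) :
    eLpNorm (phiT m l i) p (volume.restrict (cube d)) ≤
      ENNReal.ofReal ((1.117 : ℝ) ^ d * (2 : ℝ) ^ ((d : ℝ) / p.toReal) *
        (2 : ℝ) ^ (-(∑ j, (l j : ℝ)) / p.toReal)) := by
  classical
  have hifacts : ∀ j, 1 ≤ i j ∧ i j ≤ 2 ^ l j - 1 ∧ i j % 2 = 1 := by
    unfold idxSet at hi
    exact (Finset.mem_filter.1 hi).2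
  have hilt : ∀ j, i j < 2 ^ l j := by
    intro j
    have := (hifacts j).2.1
    have h2 := Nat.two_pow_pos (l j)
    omega
  set B : Set (Fin d → ℝ) := Set.univ.pi fun j =>
    Set.Icc (xg (l j) (i j) - hstep (l j)) (xg (l j) (i j) + hstep (l j)) with hB
  have hBmeas : MeasurableSet B := MeasurableSet.univ_pi fun j => measurableSet_Icc
  have hind : phiT m l i = B.indicator (phiT m l i) := by
    funext x
    by_cases hx : x ∈ B
    · rw [Set.indicator_of_mem hx]
    · rw [Set.indicator_of_notMem hx]
      rw [hB, Set.mem_univ_pi] at hx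
      push_neg at hx
      obtain ⟨j, hj⟩ := hx
      unfold phiT
      exact Finset.prod_eq_zero (Finset.mem_univ j) (phi1_zero _ hj)
  have hbound : ∀ x, ‖phiT m l i x‖ ≤ (1.117:ℝ) ^ d := by
    intro x
    rw [Real.norm_eq_abs]
    unfold phiT
    rw [Finset.abs_prod]
    calc ∏ j, |phi1 m (l j) (i j) (x j)| ≤ ∏ j : Fin d, (1.117:ℝ) := by
          apply Finset.prod_le_prod (fun j _ => abs_nonneg _)
          intro j _
          exact phi1_bound hm (hl j) (hifacts j).2.2 (hilt j) _
      _ = (1.117:ℝ) ^ d := by rw [Finset.prod_const, Finset.card_univ, Fintype.card_fin]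
  have h1 : eLpNorm (phiT m l i) p (volume.restrict (cube d)) ≤ eLpNorm (phiT m l i) p volume :=
    eLpNorm_mono_measure _ Measure.restrict_le_self
  have h2 : eLpNorm (phiT m l i) p volume = eLpNorm (phiT m l i) p (volume.restrict B) := by
    conv_lhs => rw [hind]
    exact eLpNorm_indicator_eq_eLpNorm_restrict hBmeas
  have h3 : eLpNorm (phiT m l i) p (volume.restrict B) ≤
      (volume.restrict B) Set.univ ^ p.toReal⁻¹ * ENNReal.ofReal ((1.117:ℝ) ^ d) :=
    eLpNorm_le_of_ae_bound (ae_of_all _ hbound)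
  have hrestr : (volume.restrict B) Set.univ = volume B := by
    rw [Measure.restrict_apply_univ]
  set D : ℝ := (d : ℝ) - ∑ j, (l j : ℝ) with hD
  have hvol : volume B = ENNReal.ofReal ((2:ℝ) ^ D) := by
    rw [hB, volume_pi_pi]
    have hlen : ∀ j : Fin d,
        volume (Set.Icc (xg (l j) (i j) - hstep (l j)) (xg (l j) (i j) + hstep (l j)))
          = ENNReal.ofReal ((2:ℝ) ^ ((1:ℝ) - (l j : ℝ))) := by
      intro j
      rw [Real.volume_Icc]
      congr 1
      have hh : hstep (l j) = (2:ℝ) ^ (-(l j : ℝ)) := by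
        unfold hstep
        rw [← Real.rpow_intCast 2 (-(l j : ℤ))]
        push_cast
        ring_nf
      have : (2:ℝ) ^ ((1:ℝ) - (l j : ℝ)) = 2 * hstep (l j) := by
        rw [hh, Real.rpow_sub (by norm_num), Real.rpow_one,
          Real.rpow_neg (by norm_num : (0:ℝ) ≤ 2)]
        ring
      rw [this]
      ring
    rw [Finset.prod_congr rfl (fun j _ => hlen j)]
    rw [← ENNReal.ofReal_prod_of_nonneg (fun j _ => by positivity)]
    congr 1
    rw [← myRpowSum]
    congr 1
    rw [Finset.sum_sub_distrib]
    simp [hD]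
  have hVpos : (0:ℝ) < (2:ℝ) ^ D := Real.rpow_pos_of_pos (by norm_num) _
  have hfinal : (ENNReal.ofReal ((2:ℝ) ^ D)) ^ p.toReal⁻¹ * ENNReal.ofReal ((1.117:ℝ) ^ d)
      = ENNReal.ofReal ((1.117 : ℝ) ^ d * (2 : ℝ) ^ ((d : ℝ) / p.toReal) *
          (2 : ℝ) ^ (-(∑ j, (l j : ℝ)) / p.toReal)) := by
    rw [ENNReal.ofReal_rpow_of_pos hVpos]
    rw [← ENNReal.ofReal_mul (by positivity)]
    congr 1
    rw [← Real.rpow_natCast (1.117:ℝ) d]  -- maybe unneeded; keep both as is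
    rw [Real.rpow_natCast]
    rw [← Real.rpow_mul (by norm_num : (0:ℝ) ≤ 2)]
    rw [show D * p.toReal⁻¹ = (d:ℝ) / p.toReal + (-(∑ j, (l j : ℝ))) / p.toReal from by
      rw [hD]; field_simp; ring]
    rw [Real.rpow_add (by norm_num : (0:ℝ) < 2)]
    ring
  calc eLpNorm (phiT m l i) p (volume.restrict (cube d))
      ≤ eLpNorm (phiT m l i) p volume := h1
    _ = eLpNorm (phiT m l i) p (volume.restrict B) := h2
    _ ≤ (volume.restrict B) Set.univ ^ p.toReal⁻¹ * ENNReal.ofReal ((1.117:ℝ) ^ d) := h3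
    _ = (ENNReal.ofReal ((2:ℝ) ^ D)) ^ p.toReal⁻¹ * ENNReal.ofReal ((1.117:ℝ) ^ d) := by
        rw [hrestr, hvol]
    _ = _ := hfinal
end
end

section
/- Let n_0, n ∈ ℕ₊ and M > 0. For any filter w ∈ ℝ^{n+1} and any bias b ∈ ℝ^{n_0+n}, there exist a depth L ≤ ⌈n/(s−1)⌉, a depth-L CNN h_L with input dimension n_0 and filters of length s, and integers n₁, n₂ ≥ 0 such that for every x ∈ [0,M]^{n_0} one has h_L(x) = [0_{n₁}; σ(w*x + b); 0_{n₂}]. -/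
noncomputable section

open Finset

/-- Zero extension of a filter `w ∈ ℝ^{m+1}` to all of `ℕ` (`w_j := 0` for `j ∉ {0,…,m}`). -/
def filt {m : ℕ} (w : Fin (m + 1) → ℝ) : ℕ → ℝ :=
  fun j => if h : j < m + 1 then w ⟨j, h⟩ else 0

/-- Discrete convolution of a filter `w ∈ ℝ^{m+1}` with a vector `x ∈ ℝ^n`
(represented as `x : ℕ → ℝ`, entries of index `≥ n` being ignored), producing a vector
in `ℝ^{n+m}`: `(w*x)_i = ∑_{k<n} w_{i-k} x_k` (zero-based indexing). -/
def conv {m : ℕ} (w : Fin (m + 1) → ℝ) (n : ℕ) (x : ℕ → ℝ) : ℕ → ℝ :=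
  fun i => ∑ k ∈ Finset.range n, if k ≤ i then filt w (i - k) * x k else 0

/-- One CNN layer with filter `w ∈ ℝ^{s+1}` and bias `b`, acting on a vector of length `n`:
`x ↦ σ(w*x + b) ∈ ℝ^{n+s}` (entries of index `≥ n+s` are set to `0`). -/
def layer (s : ℕ) (w : Fin (s + 1) → ℝ) (b : ℕ → ℝ) (n : ℕ) (x : ℕ → ℝ) : ℕ → ℝ :=
  fun i => if i < n + s then relu (conv w n x i + b i) else 0

/-- Apply a list of CNN layers (given by their filter/bias pairs) to a vector of length `n`;
a list of length `L` yields the depth-`L` CNN map `h_L = σ∘A_{w_L,b_L}∘⋯∘σ∘A_{w_1,b_1}`. -/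
def applyCNN (s : ℕ) : List ((Fin (s + 1) → ℝ) × (ℕ → ℝ)) → ℕ → (ℕ → ℝ) → (ℕ → ℝ)
  | [], _, x => x
  | wb :: ps, n, x => applyCNN s ps (n + s) (layer s wb.1 wb.2 n x)

/-- A vector `x ∈ ℝ^n` viewed as an element of `ℕ → ℝ` (zero outside `{0,…,n-1}`). -/
def embed (n : ℕ) (x : Fin n → ℝ) : ℕ → ℝ := fun i => if h : i < n then x ⟨i, h⟩ else 0

open Polynomial

/-- convolution with a polynomial's coefficients -/

def cv (p : ℝ[X]) (n : ℕ) (x : ℕ → ℝ) : ℕ → ℝ :=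
  fun i => ∑ k ∈ Finset.range n, if k ≤ i then p.coeff (i - k) * x k else 0

def fromPoly (s : ℕ) (q : ℝ[X]) : Fin (s + 1) → ℝ := fun j => q.coeff j

lemma filt_fromPoly (s : ℕ) (q : ℝ[X]) (hq : q.natDegree ≤ s) (j : ℕ) :
    filt (fromPoly s q) j = q.coeff j := by
  unfold filt fromPoly
  split_ifs with h
  · rfl
  · exact (Polynomial.coeff_eq_zero_of_natDegree_lt (by omega)).symm

lemma conv_fromPoly (s : ℕ) (q : ℝ[X]) (hq : q.natDegree ≤ s) (n : ℕ) (x : ℕ → ℝ) :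
    conv (fromPoly s q) n x = cv q n x := by
  funext i
  unfold conv cv
  refine Finset.sum_congr rfl fun k _ => ?_
  rw [filt_fromPoly s q hq]

def toPoly {m : ℕ} (w : Fin (m + 1) → ℝ) : ℝ[X] :=
  ∑ j : Fin (m + 1), Polynomial.C (w j) * Polynomial.X ^ (j : ℕ)

lemma coeff_toPoly {m : ℕ} (w : Fin (m + 1) → ℝ) (i : ℕ) :
    (toPoly w).coeff i = filt w i := by
  unfold toPoly filt
  rw [Polynomial.finset_sum_coeff]
  simp only [Polynomial.coeff_C_mul, Polynomial.coeff_X_pow, mul_ite, mul_one, mul_zero]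
  split_ifs with h
  · rw [Finset.sum_eq_single (⟨i, h⟩ : Fin (m + 1))]
    · simp
    · intro b _ hb
      simp only [ite_eq_right_iff]
      intro hbi
      exact absurd (Fin.ext hbi.symm : b = ⟨i, h⟩) hb
    · simp
  · apply Finset.sum_eq_zero
    intro j _
    simp only [ite_eq_right_iff]
    intro hji
    omega
    -- (j : ℕ) = i but j < m+1 contradicts ¬ i < m+1

lemma natDegree_toPoly {m : ℕ} (w : Fin (m + 1) → ℝ) : (toPoly w).natDegree ≤ m := by
  apply Polynomial.natDegree_sum_le_of_forall_le
  intro j _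
  exact (Polynomial.natDegree_C_mul_le _ _).trans (by simpa using Nat.lt_succ_iff.mp j.2)

lemma conv_eq_cv {m : ℕ} (w : Fin (m + 1) → ℝ) (n : ℕ) (x : ℕ → ℝ) :
    conv w n x = cv (toPoly w) n x := by
  funext i
  unfold conv cv
  exact Finset.sum_congr rfl fun k _ => by rw [coeff_toPoly]

lemma cv_congr (p : ℝ[X]) (n : ℕ) {x y : ℕ → ℝ} (h : ∀ k < n, x k = y k) :
    cv p n x = cv p n y := by
  funext i
  exact Finset.sum_congr rfl fun k hk => by rw [h k (Finset.mem_range.mp hk)]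

lemma cv_zero_of_le (p : ℝ[X]) {d n i : ℕ} (hd : p.natDegree ≤ d) (hi : n + d ≤ i)
    (x : ℕ → ℝ) : cv p n x i = 0 := by
  apply Finset.sum_eq_zero
  intro k hk
  have hk' := Finset.mem_range.mp hk
  split_ifs with h
  · rw [Polynomial.coeff_eq_zero_of_natDegree_lt (by omega), zero_mul]
  · rfl

lemma cv_one (n : ℕ) (x : ℕ → ℝ) (i : ℕ) : cv 1 n x i = if i < n then x i else 0 := by
  unfold cv
  split_ifs with h
  · rw [Finset.sum_eq_single i]
    · simp
    · intro k _ hk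
      simp only [Polynomial.coeff_one, ite_eq_right_iff]
      intro hki
      rw [if_neg (by omega), zero_mul]
    · intro hi; exact absurd (Finset.mem_range.mpr h) hi
  · apply Finset.sum_eq_zero
    intro k hk
    have := Finset.mem_range.mp hk
    split_ifs with h2
    · rw [Polynomial.coeff_one, if_neg (by omega), zero_mul]
    · rfl

lemma cv_add_const (p : ℝ[X]) (n : ℕ) (x : ℕ → ℝ) (c : ℝ) (i : ℕ) :
    cv p n (fun k => x k + c) i = cv p n x i + c * cv p n (fun _ => 1) i := by
  unfold cv
  rw [Finset.mul_sum, ← Finset.sum_add_distrib]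
  refine Finset.sum_congr rfl fun k _ => ?_
  split_ifs with h
  · ring
  · ring

lemma cv_comp (p q : ℝ[X]) {n m : ℕ} (hm : n + p.natDegree ≤ m) (x : ℕ → ℝ) (i : ℕ) :
    cv q m (cv p n x) i = cv (p * q) n x i := by
  unfold cv
  have step1 : ∀ j ∈ Finset.range m,
      (if j ≤ i then q.coeff (i - j) * ∑ k ∈ Finset.range n,
          (if k ≤ j then p.coeff (j - k) * x k else 0) else 0)
      = ∑ k ∈ Finset.range n,
          (if k ≤ j ∧ j ≤ i then p.coeff (j - k) * q.coeff (i - j) * x k else 0) := by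
    intro j _
    split_ifs with h
    · rw [Finset.mul_sum]
      refine Finset.sum_congr rfl fun k _ => ?_
      by_cases h2 : k ≤ j
      · rw [if_pos h2, if_pos ⟨h2, h⟩]; ring
      · rw [if_neg h2, if_neg (fun hc => h2 hc.1), mul_zero]
    · refine (Finset.sum_eq_zero fun k _ => ?_).symm
      rw [if_neg (by tauto)]
  rw [Finset.sum_congr rfl step1, Finset.sum_comm]
  refine Finset.sum_congr rfl fun k hk => ?_
  have hkn := Finset.mem_range.mp hk
  by_cases hki : k ≤ i
  · rw [if_pos hki]
    have hmul : (p * q).coeff (i - k) =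
        ∑ t ∈ Finset.range (i - k + 1), p.coeff t * q.coeff (i - k - t) := by
      rw [Polynomial.coeff_mul, Finset.Nat.sum_antidiagonal_eq_sum_range_succ_mk]
    rw [hmul, Finset.sum_mul]
    -- RHS: ∑ t ∈ range (i-k+1), p.coeff t * q.coeff (i-k-t) * x k
    -- LHS: ∑ j ∈ range m, if k ≤ j ∧ j ≤ i then p.coeff (j-k) * q.coeff (i-j) * x k else 0
    have lhs_eq : (∑ j ∈ Finset.range m,
        (if k ≤ j ∧ j ≤ i then p.coeff (j - k) * q.coeff (i - j) * x k else 0))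
        = ∑ j ∈ (Finset.range m).filter (fun j => k ≤ j ∧ j ≤ i),
            p.coeff (j - k) * q.coeff (i - j) * x k := by
      rw [Finset.sum_filter]
    rw [lhs_eq]
    have hsub : (Finset.range m).filter (fun j => k ≤ j ∧ j ≤ i) ⊆ Finset.Icc k i := by
      intro j hj
      simp only [Finset.mem_filter, Finset.mem_range] at hj
      exact Finset.mem_Icc.mpr hj.2
    rw [Finset.sum_subset hsub, ← Finset.Ico_add_one_right_eq_Icc, Finset.sum_Ico_eq_sum_range]
    · have : i + 1 - k = i - k + 1 := by omega
      rw [this]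
      refine Finset.sum_congr rfl fun t _ => ?_
      have h1 : k + t - k = t := by omega
      have h2 : i - (k + t) = i - k - t := by omega
      rw [h1, h2]
    · intro j hj hj2
      have hj' := Finset.mem_Icc.mp hj
      have hjm : m ≤ j := by
        by_contra hc
        exact hj2 (Finset.mem_filter.mpr ⟨Finset.mem_range.mpr (by omega), hj'.1, hj'.2⟩)
      rw [Polynomial.coeff_eq_zero_of_natDegree_lt (show p.natDegree < j - k by omega),
        zero_mul, zero_mul]
  · rw [if_neg hki]
    refine Finset.sum_eq_zero fun j _ => ?_
    rw [if_neg (by omega)]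

def Sabs (p : ℝ[X]) : ℝ := ∑ j ∈ Finset.range (p.natDegree + 1), |p.coeff j|

lemma Sabs_nonneg (p : ℝ[X]) : 0 ≤ Sabs p :=
  Finset.sum_nonneg fun j _ => abs_nonneg _

lemma abs_coeff_le_Sabs (p : ℝ[X]) (j : ℕ) : |p.coeff j| ≤ Sabs p := by
  by_cases h : j ≤ p.natDegree
  · exact Finset.single_le_sum (f := fun j => |p.coeff j|) (fun t _ => abs_nonneg _)
      (Finset.mem_range.mpr (by omega))
  · rw [Polynomial.coeff_eq_zero_of_natDegree_lt (by omega), abs_zero]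
    exact Sabs_nonneg p

def bnd (n₀ : ℕ) (M : ℝ) (p : ℝ[X]) : ℝ := n₀ * (M * Sabs p)

lemma abs_cv_le (p : ℝ[X]) (n₀ : ℕ) {x : ℕ → ℝ} {M : ℝ} (hM : 0 ≤ M)
    (hx : ∀ k, |x k| ≤ M) (i : ℕ) : |cv p n₀ x i| ≤ bnd n₀ M p := by
  unfold cv bnd
  calc |∑ k ∈ Finset.range n₀, if k ≤ i then p.coeff (i - k) * x k else 0|
      ≤ ∑ k ∈ Finset.range n₀, |if k ≤ i then p.coeff (i - k) * x k else 0| :=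
        Finset.abs_sum_le_sum_abs _ _
    _ ≤ ∑ _k ∈ Finset.range n₀, M * Sabs p := by
        refine Finset.sum_le_sum fun k _ => ?_
        split_ifs with h
        · rw [abs_mul]
          calc |p.coeff (i - k)| * |x k| ≤ Sabs p * M :=
                mul_le_mul (abs_coeff_le_Sabs p _) (hx k) (abs_nonneg _) (Sabs_nonneg p)
          _ = M * Sabs p := mul_comm _ _
        · rw [abs_zero]
          exact mul_nonneg hM (Sabs_nonneg p)
    _ = n₀ * (M * Sabs p) := by rw [Finset.sum_const, Finset.card_range, nsmul_eq_mul]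

lemma cv_add_bnd_nonneg (p : ℝ[X]) (n₀ : ℕ) {x : ℕ → ℝ} {M : ℝ} (hM : 0 ≤ M)
    (hx : ∀ k, |x k| ≤ M) (i : ℕ) : 0 ≤ cv p n₀ x i + bnd n₀ M p := by
  have := abs_cv_le p n₀ hM hx i
  have := abs_le.mp this
  linarith [this.1]

lemma relu_of_nonneg {t : ℝ} (h : 0 ≤ t) : relu t = t := max_eq_left h

def state (n₀ : ℕ) (X : ℕ → ℝ) (p : ℝ[X]) (m : ℕ) (B : ℝ) : ℕ → ℝ :=
  fun i => if i < m then cv p n₀ X i + B else 0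

lemma applyCNN_append (s : ℕ) (ps qs : List ((Fin (s + 1) → ℝ) × (ℕ → ℝ))) (n : ℕ)
    (x : ℕ → ℝ) :
    applyCNN s (ps ++ qs) n x = applyCNN s qs (n + ps.length * s) (applyCNN s ps n x) := by
  induction ps generalizing n x with
  | nil => simp [applyCNN]
  | cons wb t ih =>
    show applyCNN s (t ++ qs) (n + s) (layer s wb.1 wb.2 n x)
      = applyCNN s qs (n + (wb :: t).length * s) (applyCNN s (wb :: t) n x)
    rw [ih]
    have hn : n + s + t.length * s = n + (wb :: t).length * s := by
      simp [List.length_cons]; ring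
    rw [hn]
    rfl

lemma abs_embed_le {n₀ : ℕ} {x : Fin n₀ → ℝ} {M : ℝ} (hM : 0 < M)
    (hx : ∀ j, x j ∈ Set.Icc 0 M) (k : ℕ) : |embed n₀ x k| ≤ M := by
  unfold embed
  split_ifs with h
  · rcases hx ⟨k, h⟩ with ⟨h1, h2⟩
    rw [abs_of_nonneg h1]; exact h2
  · rw [abs_zero]; exact le_of_lt hM

/-- one middle layer -/

lemma layer_step (s : ℕ) (n₀ : ℕ) (M : ℝ) (hM : 0 < M) (q P : ℝ[X])
    (hq : q.natDegree ≤ s) (c : ℕ) (hP : P.natDegree ≤ c * s) (B : ℝ)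
    (X : ℕ → ℝ) (hX : ∀ k, |X k| ≤ M) :
    layer s (fromPoly s q)
      (fun i => bnd n₀ M (P * q) - B * cv q (n₀ + c * s) (fun _ => 1) i)
      (n₀ + c * s) (state n₀ X P (n₀ + c * s) B)
      = state n₀ X (P * q) (n₀ + (c + 1) * s) (bnd n₀ M (P * q)) := by
  set m := n₀ + c * s with hm
  funext i
  unfold layer state
  have hms : m + s = n₀ + (c + 1) * s := by rw [hm]; ring
  rw [hms]
  split_ifs with h
  · rw [conv_fromPoly s q hq]
    have hcongr : cv q m (fun j => if j < m then cv P n₀ X j + B else 0) i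
        = cv q m (fun j => cv P n₀ X j + B) i := by
      have := cv_congr (x := fun j => if j < m then cv P n₀ X j + B else 0)
        (y := fun j => cv P n₀ X j + B) q m (fun k hk => by beta_reduce; rw [if_pos hk])
      exact congrFun this i
    rw [hcongr, cv_add_const q m (cv P n₀ X) B i,
      cv_comp P q (by omega) X i]
    have : cv (P * q) n₀ X i + bnd n₀ M (P * q) - B * cv q m (fun _ => 1) i
        + B * cv q m (fun _ => 1) i = cv (P * q) n₀ X i + bnd n₀ M (P * q) := by ring
    rw [show cv (P * q) n₀ X i + B * cv q m (fun _ => 1) i +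
        (bnd n₀ M (P * q) - B * cv q m (fun _ => 1) i)
        = cv (P * q) n₀ X i + bnd n₀ M (P * q) by ring]
    exact relu_of_nonneg (cv_add_bnd_nonneg (P * q) n₀ (le_of_lt hM) hX i)
  · rfl

lemma mid (s : ℕ) (n₀ : ℕ) (M : ℝ) (hM : 0 < M)
    (qs : List ℝ[X]) (hqs : ∀ q ∈ qs, q.natDegree ≤ s) :
    ∀ (c : ℕ) (P : ℝ[X]), P.natDegree ≤ c * s → ∀ B : ℝ,
    ∃ ps : List ((Fin (s + 1) → ℝ) × (ℕ → ℝ)), ps.length = qs.length ∧ ∃ B' : ℝ,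
      ∀ X : ℕ → ℝ, (∀ k, |X k| ≤ M) →
        applyCNN s ps (n₀ + c * s) (state n₀ X P (n₀ + c * s) B)
          = state n₀ X (P * qs.prod) (n₀ + (c + qs.length) * s) B' := by
  induction qs with
  | nil =>
    intro c P hP B
    exact ⟨[], rfl, B, fun X hX => by simp [applyCNN, state]⟩
  | cons q t ih =>
    intro c P hP B
    have hq : q.natDegree ≤ s := hqs q (List.mem_cons_self)
    have ht : ∀ r ∈ t, r.natDegree ≤ s := fun r hr => hqs r (List.mem_cons_of_mem _ hr)
    have hPq : (P * q).natDegree ≤ (c + 1) * s := by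
      calc (P * q).natDegree ≤ P.natDegree + q.natDegree := Polynomial.natDegree_mul_le
        _ ≤ c * s + s := add_le_add hP hq
        _ = (c + 1) * s := by ring
    obtain ⟨ps', hlen, B', hps'⟩ := (ih ht) (c + 1) (P * q) hPq (bnd n₀ M (P * q))
    refine ⟨(fromPoly s q,
      fun i => bnd n₀ M (P * q) - B * cv q (n₀ + c * s) (fun _ => 1) i) :: ps',
      by simp [hlen], B', fun X hX => ?_⟩
    show applyCNN s ps' (n₀ + c * s + s) _ = _
    rw [layer_step s n₀ M hM q P hq c hP B X hX,
      show n₀ + c * s + s = n₀ + (c + 1) * s by ring,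
      hps' X hX, mul_assoc]
    congr 2
    simp [List.length_cons]
    left; ring

lemma prefix_split : ∀ (l : List ℝ[X]) (m : ℕ), 1 ≤ m →
    (∀ q ∈ l, 1 ≤ q.natDegree ∧ q.natDegree ≤ 2) →
    m ≤ (l.map Polynomial.natDegree).sum →
    ∃ t u : List ℝ[X], l = t ++ u ∧ m ≤ (t.map Polynomial.natDegree).sum ∧
      (t.map Polynomial.natDegree).sum ≤ m + 1 := by
  intro l
  induction l with
  | nil => intro m hm _ hsum; simp at hsum; omega
  | cons a l' ih =>
    intro m hm hdeg hsum
    have hda := hdeg a (List.mem_cons_self)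
    by_cases hma : m ≤ a.natDegree
    · exact ⟨[a], l', rfl, by simpa using hma, by simp; omega⟩
    · have h1 : 1 ≤ m - a.natDegree := by omega
      have h2 : m - a.natDegree ≤ (l'.map Polynomial.natDegree).sum := by
        simp only [List.map_cons, List.sum_cons] at hsum
        omega
      obtain ⟨t', u', rfl, hlo, hhi⟩ := ih (m - a.natDegree) h1
        (fun q hq => hdeg q (List.mem_cons_of_mem _ hq)) h2
      refine ⟨a :: t', u', rfl, ?_, ?_⟩ <;>
        simp only [List.map_cons, List.sum_cons] <;> omega

lemma chunk (s : ℕ) (hs : 2 ≤ s) : ∀ (N : ℕ) (l : List ℝ[X]), l.length ≤ N →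
    (∀ q ∈ l, 1 ≤ q.natDegree ∧ q.natDegree ≤ 2) →
    ∃ cs : List ℝ[X], cs.prod = l.prod ∧ (∀ q ∈ cs, q.natDegree ≤ s) ∧
      cs.length * (s - 1) ≤ (l.map Polynomial.natDegree).sum + (s - 2) := by
  intro N
  induction N with
  | zero =>
    intro l hl _
    have : l = [] := List.length_eq_zero_iff.mp (by omega)
    subst this
    exact ⟨[], rfl, by simp, by simp⟩
  | succ N ih =>
    intro l hl hdeg
    by_cases hD : (l.map Polynomial.natDegree).sum ≤ s
    · rcases l with _ | ⟨a, l'⟩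
      · exact ⟨[], rfl, by simp, by simp⟩
      · refine ⟨[(a :: l').prod], by simp, ?_, ?_⟩
        · intro q hq
          rw [List.mem_singleton] at hq
          subst hq
          exact (Polynomial.natDegree_list_prod_le _).trans hD
        · have : 1 ≤ ((a :: l').map Polynomial.natDegree).sum := by
            have := hdeg a (List.mem_cons_self)
            simp only [List.map_cons, List.sum_cons]
            omega
          simp only [List.length_singleton, one_mul]
          omega
    · push_neg at hD
      obtain ⟨t, u, rfl, hlo, hhi⟩ := prefix_split l (s - 1) (by omega) hdeg (by omega)
      have htne : t ≠ [] := by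
        intro h
        subst h
        simp at hlo
        omega
      have hulen : u.length ≤ N := by
        have := (List.length_append : (t ++ u).length = t.length + u.length)
        have : 1 ≤ t.length := List.length_pos_iff.mpr htne
        have h2 := (List.length_append : (t ++ u).length = t.length + u.length)
        omega
      obtain ⟨cs', hprod', hdeg', hcount'⟩ := ih u hulen
        (fun q hq => hdeg q (List.mem_append_right _ hq))
      refine ⟨t.prod :: cs', ?_, ?_, ?_⟩
      · rw [List.prod_cons, hprod', List.prod_append]
      · intro q hq
        rcases List.mem_cons.mp hq with h | h
        · subst h
          exact (Polynomial.natDegree_list_prod_le _).trans (hhi.trans (by omega))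
        · exact hdeg' q h
      · have hsplit : ((t ++ u).map Polynomial.natDegree).sum
            = (t.map Polynomial.natDegree).sum + (u.map Polynomial.natDegree).sum := by
          rw [List.map_append, List.sum_append]
        simp only [List.length_cons]
        have : (cs'.length + 1) * (s - 1) = cs'.length * (s - 1) + (s - 1) := by ring
        omega

lemma natDegree_list_prod_eq (l : List ℝ[X]) (h : ∀ q ∈ l, q ≠ 0) :
    l.prod.natDegree = (l.map Polynomial.natDegree).sum := by
  induction l with
  | nil => simp
  | cons a t ih =>
    rw [List.prod_cons, List.map_cons, List.sum_cons,
      Polynomial.natDegree_mul (h a (List.mem_cons_self))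
        (List.prod_ne_zero fun h0 => h 0 (List.mem_cons_of_mem _ h0) rfl),
      ih fun q hq => h q (List.mem_cons_of_mem _ hq)]

lemma factor (s : ℕ) (hs : 2 ≤ s) (n : ℕ) (hn : 0 < n) (p : ℝ[X]) (hp : p.natDegree ≤ n) :
    ∃ qs : List ℝ[X], qs.length = (n - 1) / (s - 1) + 1 ∧
      (∀ q ∈ qs, q.natDegree ≤ s) ∧ qs.prod = p := by
  set L := (n - 1) / (s - 1) + 1 with hL
  by_cases hcase : p.natDegree ≤ s
  · refine ⟨p :: List.replicate (L - 1) 1, ?_, ?_, ?_⟩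
    · have h1L : 1 ≤ L := Nat.succ_le_succ (Nat.zero_le _)
      simp only [List.length_cons, List.length_replicate]
      omega
    · intro q hq
      rcases List.mem_cons.mp hq with h | h
      · subst h; exact hcase
      · rw [List.eq_of_mem_replicate h]
        simp
    · rw [List.prod_cons, List.prod_replicate, one_pow, mul_one]
  · push_neg at hcase
    have hp0 : p ≠ 0 := by
      intro h
      rw [h, Polynomial.natDegree_zero] at hcase
      omega
    obtain ⟨u, hu⟩ := UniqueFactorizationMonoid.factors_prod hp0
    set l := (UniqueFactorizationMonoid.factors p).toList with hldef
    have hl : l.prod = (UniqueFactorizationMonoid.factors p).prod := Multiset.prod_toList _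
    have hlp : l.prod * (u : ℝ[X]) = p := by rw [hl]; exact hu
    have hdeg : ∀ q ∈ l, 1 ≤ q.natDegree ∧ q.natDegree ≤ 2 := by
      intro q hq
      have hirr : Irreducible q :=
        UniqueFactorizationMonoid.irreducible_of_factor q (Multiset.mem_toList.mp hq)
      exact ⟨hirr.natDegree_pos, hirr.natDegree_le_two⟩
    -- the unit is a nonzero constant
    have hu0 : (u : ℝ[X]) ≠ 0 := Units.ne_zero u
    have hudeg : (u : ℝ[X]).degree ≤ 0 :=
      le_of_eq (Polynomial.isUnit_iff_degree_eq_zero.mp u.isUnit)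
    set r : ℝ := (u : ℝ[X]).coeff 0 with hrdef
    have hC : Polynomial.C r = (u : ℝ[X]) := (Polynomial.eq_C_of_degree_le_zero hudeg).symm
    have hr0 : r ≠ 0 := fun h => hu0 (by rw [← hC, h, map_zero])
    -- degrees
    have hl0 : ∀ q ∈ l, q ≠ 0 := fun q hq =>
      Polynomial.ne_zero_of_natDegree_gt (n := 0) (hdeg q hq).1
    have hlprod0 : l.prod ≠ 0 := List.prod_ne_zero fun h0 => by
      simpa using (hdeg 0 h0).1
    have hdegsum : (l.map Polynomial.natDegree).sum = p.natDegree := by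
      rw [← natDegree_list_prod_eq l hl0, ← hlp, Polynomial.natDegree_mul hlprod0 hu0,
        ← hC, Polynomial.natDegree_C, add_zero]
    obtain ⟨cs, hcprod, hcdeg, hccount⟩ := chunk s hs l.length l le_rfl hdeg
    have hcsne : cs ≠ [] := by
      intro h
      rw [h] at hcprod
      simp at hcprod
      have : l.prod.natDegree = 0 := by rw [← hcprod]; simp
      rw [natDegree_list_prod_eq l hl0, hdegsum] at this
      omega
    have hcsL : cs.length ≤ L := by
      have h1 : cs.length * (s - 1) ≤ (n - 1) + (s - 1) := by
        rw [hdegsum] at hccount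
        omega
      have h2 : cs.length ≤ ((n - 1) + (s - 1)) / (s - 1) :=
        (Nat.le_div_iff_mul_le (by omega)).mpr h1
      rwa [Nat.add_div_right _ (by omega)] at h2
    rcases cs with _ | ⟨c₀, cs'⟩
    · exact absurd rfl hcsne
    refine ⟨(Polynomial.C r * c₀) :: (cs' ++ List.replicate (L - (c₀ :: cs').length) 1),
      ?_, ?_, ?_⟩
    · simp only [List.length_cons, List.length_append, List.length_replicate] at *
      omega
    · intro q hq
      rcases List.mem_cons.mp hq with h | h
      · subst h
        exact (Polynomial.natDegree_C_mul_le _ _).trans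
          (hcdeg c₀ (List.mem_cons_self))
      · rcases List.mem_append.mp h with h | h
        · exact hcdeg q (List.mem_cons_of_mem _ h)
        · rw [List.eq_of_mem_replicate h]; simp
    · rw [List.prod_cons, List.prod_append, List.prod_replicate, one_pow, mul_one,
        mul_assoc]
      rw [List.prod_cons] at hcprod
      rw [hcprod, hC, mul_comm]
      exact hlp

lemma L_le_ceil (s n : ℕ) (hs : 2 ≤ s) (hn : 0 < n) :
    (((n - 1) / (s - 1) + 1 : ℕ) : ℝ) ≤ (⌈(n : ℝ) / ((s : ℝ) - 1)⌉ : ℝ) := by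
  set k := s - 1 with hk
  have hk1 : 1 ≤ k := by omega
  have hkR : (0 : ℝ) < (k : ℝ) := by exact_mod_cast hk1
  have hcast : (s : ℝ) - 1 = (k : ℝ) := by
    rw [hk]
    push_cast [Nat.cast_sub (by omega : 1 ≤ s)]
    ring
  rw [hcast]
  have h1 : (((n - 1) / k : ℕ) : ℝ) ≤ ((n - 1 : ℕ) : ℝ) / (k : ℝ) := Nat.cast_div_le
  have h2 : ((n - 1 : ℕ) : ℝ) = (n : ℝ) - 1 := by
    push_cast [Nat.cast_sub hn]
    ring
  have h3 : ((n : ℝ) - 1) / (k : ℝ) < (n : ℝ) / (k : ℝ) := by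
    apply div_lt_div_of_pos_right ?_ hkR
    linarith
  have h4 : (n : ℝ) / (k : ℝ) ≤ (⌈(n : ℝ) / (k : ℝ)⌉ : ℝ) := Int.le_ceil _
  have h6 : (((n - 1) / k : ℕ) : ℤ) < ⌈(n : ℝ) / (k : ℝ)⌉ := by
    rw [Int.lt_ceil, Int.cast_natCast]
    rw [h2] at h1
    linarith
  have h7 : (((n - 1) / k : ℕ) : ℤ) + 1 ≤ ⌈(n : ℝ) / (k : ℝ)⌉ := Int.lt_iff_add_one_le.mp h6
  have h8 : ((((n - 1) / k : ℕ) : ℤ) : ℝ) + 1 ≤ ((⌈(n : ℝ) / (k : ℝ)⌉ : ℤ) : ℝ) := by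
    exact_mod_cast h7
  rw [Int.cast_natCast] at h8
  rw [Nat.cast_add, Nat.cast_one]
  exact h8

theorem stmt6 (s : ℕ) (hs : 2 ≤ s) (n₀ n : ℕ) (hn₀ : 0 < n₀) (hn : 0 < n)
    (M : ℝ) (hM : 0 < M) (w : Fin (n + 1) → ℝ) (b : ℕ → ℝ) :
    ∃ (L : ℕ) (ps : List ((Fin (s + 1) → ℝ) × (ℕ → ℝ))),
      ps.length = L ∧ (L : ℝ) ≤ ⌈(n : ℝ) / ((s : ℝ) - 1)⌉ ∧
      ∃ n₁ n₂ : ℕ, n₁ + (n₀ + n) + n₂ = n₀ + L * s ∧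
        ∀ x : Fin n₀ → ℝ, (∀ j, x j ∈ Set.Icc 0 M) →
          applyCNN s ps n₀ (embed n₀ x) = fun i =>
            if n₁ ≤ i ∧ i < n₁ + (n₀ + n) then
              relu (conv w n₀ (embed n₀ x) (i - n₁) + b (i - n₁))
            else 0 := by
  classical
  set p := toPoly w with hpdef
  have hpn : p.natDegree ≤ n := natDegree_toPoly w
  set L := (n - 1) / (s - 1) + 1 with hLdef
  have hL1 : 1 ≤ L := Nat.succ_le_succ (Nat.zero_le _)
  have hnLs : n ≤ L * s := by
    have hk1 : 1 ≤ s - 1 := by omega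
    have hd : (n - 1) / (s - 1) < L := by omega
    have := (Nat.div_lt_iff_lt_mul (by omega : 0 < s - 1)).mp hd
    have h2 : L * (s - 1) ≤ L * s := Nat.mul_le_mul_left L (by omega)
    omega
  obtain ⟨qs, hqlen, hqdeg, hqprod⟩ := factor s hs n hn p hpn
  have hqsne : qs ≠ [] := by
    intro h
    rw [h] at hqlen
    simp at hqlen
  set qlast := qs.getLast hqsne with hqlast
  set qinit := qs.dropLast with hqinit
  have hsplit : qinit ++ [qlast] = qs := List.dropLast_append_getLast hqsne
  have hinitlen : qinit.length = L - 1 := by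
    rw [hqinit, List.length_dropLast, hqlen]
  have hinitdeg : ∀ q ∈ qinit, q.natDegree ≤ s := fun q hq =>
    hqdeg q (List.dropLast_subset _ hq)
  have hlastdeg : qlast.natDegree ≤ s := hqdeg _ (List.getLast_mem hqsne)
  have hP'deg : qinit.prod.natDegree ≤ (L - 1) * s := by
    refine (Polynomial.natDegree_list_prod_le _).trans ?_
    calc (qinit.map Polynomial.natDegree).sum ≤ (qinit.map Polynomial.natDegree).length • s :=
          List.sum_le_card_nsmul _ _ (by
            intro d hd
            obtain ⟨q, hq, rfl⟩ := List.mem_map.mp hd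
            exact hinitdeg q hq)
      _ = (L - 1) * s := by rw [List.length_map, hinitlen, smul_eq_mul]
  obtain ⟨ps₁, hps₁len, B', hB'⟩ := mid s n₀ M hM qinit hinitdeg 0 1 (by simp) 0
  simp only [Nat.zero_mul, Nat.add_zero, Nat.zero_add, one_mul, hinitlen] at hB'
  set m := n₀ + (L - 1) * s with hmdef
  have hms : m + s = n₀ + L * s := by
    have : (L - 1) * s + s = L * s := by
      conv_rhs => rw [show L = (L - 1) + 1 from (Nat.sub_add_cancel hL1).symm]
      ring
    omega
  set blast : ℕ → ℝ := fun i =>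
    (if i < n₀ + n then b i else 0) - B' * cv qlast m (fun _ => 1) i with hblast
  refine ⟨L, ps₁ ++ [(fromPoly s qlast, blast)], ?_, L_le_ceil s n hs hn, 0, L * s - n,
    by omega, ?_⟩
  · rw [List.length_append, hps₁len, hinitlen]
    simp only [List.length_singleton]
    omega
  · intro x hx
    set X := embed n₀ x with hX
    have hXb : ∀ k, |X k| ≤ M := abs_embed_le hM hx
    have hstate0 : X = state n₀ X 1 n₀ 0 := by
      funext i
      unfold state
      rw [cv_one]
      by_cases h : i < n₀
      · rw [if_pos h, if_pos h, add_zero]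
      · rw [if_neg h, hX]
        unfold embed
        rw [dif_neg h]
    rw [applyCNN_append, hps₁len, hinitlen, ← hmdef]
    conv_lhs => rw [hstate0]
    rw [hB' X hXb]
    funext i
    show layer s (fromPoly s qlast) blast m (state n₀ X qinit.prod m B') i = _
    unfold layer
    rw [hms]
    by_cases h : i < n₀ + L * s
    · rw [if_pos h, conv_fromPoly s qlast hlastdeg]
      have hcongr : cv qlast m (state n₀ X qinit.prod m B') i
          = cv qlast m (fun j => cv qinit.prod n₀ X j + B') i := by
        refine congrFun (cv_congr qlast m fun k hk => ?_) i
        unfold state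
        rw [if_pos hk]
      rw [hcongr, cv_add_const qlast m (cv qinit.prod n₀ X) B' i,
        cv_comp qinit.prod qlast (by omega) X i]
      have hprod : qinit.prod * qlast = p := by
        rw [← hqprod, ← hsplit, List.prod_append, List.prod_singleton]
      rw [hprod, hblast]
      have harr : cv p n₀ X i + B' * cv qlast m (fun _ => 1) i +
          ((if i < n₀ + n then b i else 0) - B' * cv qlast m (fun _ => 1) i)
          = cv p n₀ X i + (if i < n₀ + n then b i else 0) := by ring
      rw [harr]
      by_cases h2 : i < n₀ + n
      · rw [if_pos h2, if_pos (by omega : 0 ≤ i ∧ i < 0 + (n₀ + n))]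
        rw [Nat.sub_zero, conv_eq_cv, ← hpdef]
      · rw [if_neg h2, if_neg (by omega : ¬(0 ≤ i ∧ i < 0 + (n₀ + n)))]
        rw [cv_zero_of_le p hpn (by omega) X, add_zero]
        unfold relu
        simp
    · rw [if_neg h, if_neg (by omega : ¬(0 ≤ i ∧ i < 0 + (n₀ + n)))]
end
end
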